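/- Let D be a field of characteristic 2 and f, g : D → D additive functions satisfying x^{-1} f(x) + g(x^{-1}) = 0 for all x ≠ 0. Then f(aba) = a g(b) for all a, b ∈ D. -/

import Mathlib

theorem stmt_11 (D : Type*) [Field D] [CharP D 2] (f g : D → D)
    (hf : ∀ x y, f (x + y) = f x + f y)
    (hg : ∀ x y, g (x + y) = g x + g y)
    (hfg : ∀ x : D, x ≠ 0 → x⁻¹ * f x + g x⁻¹ = 0) :
    ∀ a b : D, f (a * b * a) = a * g b := by
  have h2 : (2 : D) = 0 := CharTwo.two_eq_zero
  have h0f : f 0 = 0 := by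
    have h := hf 0 0
    rw [add_zero] at h
    exact (left_eq_add.mp h)
  have h0g : g 0 = 0 := by
    have h := hg 0 0
    rw [add_zero] at h
    exact (left_eq_add.mp h)
  -- g x⁻¹ = x⁻¹ * f x for x ≠ 0
  have hgi : ∀ x : D, x ≠ 0 → g x⁻¹ = x⁻¹ * f x := by
    intro x hx
    have h := eq_neg_of_add_eq_zero_right (hfg x hx)
    rw [CharTwo.neg_eq] at h
    exact h
  -- f x⁻¹ = x⁻¹ * g x for x ≠ 0
  have hfi : ∀ x : D, x ≠ 0 → f x⁻¹ = x⁻¹ * g x := by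
    intro x hx
    have h := hgi x⁻¹ (inv_ne_zero hx)
    rw [inv_inv] at h
    rw [h, ← mul_assoc, inv_mul_cancel₀ hx, one_mul]
  intro a b
  rcases eq_or_ne a 0 with ha | ha
  · simp [ha, h0f]
  rcases eq_or_ne b 0 with hb | hb
  · simp [hb, h0f, h0g]
  rcases eq_or_ne (a * b) 1 with hab | hab
  · have hb' : b = a⁻¹ := eq_inv_of_mul_eq_one_right hab
    rw [hb', mul_inv_cancel₀ ha, one_mul, hgi a ha, ← mul_assoc,
      mul_inv_cancel₀ ha, one_mul]
  · set s : D := b⁻¹ + a with hs_def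
    have hs : s ≠ 0 := by
      intro h
      apply hab
      have hba : a = b⁻¹ := by
        have := eq_neg_of_add_eq_zero_right h
        rw [CharTwo.neg_eq] at this
        exact this
      rw [hba, inv_mul_cancel₀ hb]
    set t : D := a * s * b with ht_def
    have ht : t ≠ 0 := mul_ne_zero (mul_ne_zero ha hs) hb
    have e1 : t * a⁻¹ = s * b := by
      rw [ht_def]; field_simp
    have e2 : t * s⁻¹ = a * b := by
      rw [ht_def]; field_simp
    have e3 : s * b = 1 + a * b := by
      rw [hs_def, add_mul, inv_mul_cancel₀ hb]
    have e4 : t * (s⁻¹ * b⁻¹) = a := by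
      rw [ht_def]; field_simp
    have ht2 : t = a + a * a * b := by
      rw [ht_def, hs_def]; field_simp
    have hsplit : a * b * a = a + t := by
      rw [ht2, ← add_assoc, CharTwo.add_self_eq_zero, zero_add]; ring
    have htmul : t * (a⁻¹ + s⁻¹) = 1 := by
      rw [mul_add, e1, e2, e3, add_assoc, CharTwo.add_self_eq_zero, add_zero]
    have htinv : t⁻¹ = a⁻¹ + s⁻¹ := inv_eq_of_mul_eq_one_right htmul
    have hgt : g t⁻¹ = a⁻¹ * f a + s⁻¹ * (b⁻¹ * g b + f a) := by
      rw [htinv, hg]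
      congr 1
      · exact hgi a ha
      · rw [hgi s hs, hs_def, hf, hfi b hb]
    have hft : f t = t * g t⁻¹ := by
      rw [hgi t ht, ← mul_assoc, mul_inv_cancel₀ ht, one_mul]
    rw [hsplit, hf, hft, hgt]
    linear_combination (f a) * e1 + (g b) * e4 + (f a) * e2 + (f a) * e3 +
      ((1 + a * b) * f a) * h2
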